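/- Conditional-expectation representation of CVaR: let X be an integrable real-valued random variable on a probability space and γ ∈ (0,1) a confidence level such that ℙ(−X ≥ VaR_γ(X)) = 1 − γ. Then CVaR_γ(X) = E[−X | −X ≥ VaR_γ(X)], i.e., CVaR_γ(X) is the conditional expectation of the loss given that the loss is at least the value-at-risk threshold. -/

import Mathlib

open MeasureTheory

/-- Value-at-risk of the return `X` at confidence level `β`:
`VaR_β(X) = inf {x ∈ ℝ : ℙ(x + X < 0) ≤ 1 - β}`. -/
noncomputable def VaR {Ω : Type*} [MeasurableSpace Ω] (P : Measure Ω) (X : Ω → ℝ) (β : ℝ) : ℝ :=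
  sInf {x : ℝ | (P {ω | x + X ω < 0}).toReal ≤ 1 - β}

/-- Conditional value-at-risk of the return `X` at confidence level `γ`:
`CVaR_γ(X) = (1/(1-γ)) ∫_γ^1 VaR_β(X) dβ`. -/
noncomputable def CVaR {Ω : Type*} [MeasurableSpace Ω] (P : Measure Ω) (X : Ω → ℝ) (γ : ℝ) : ℝ :=
  (1 / (1 - γ)) * ∫ β in γ..1, VaR P X β


open ProbabilityTheory Set in
theorem CVaR_aux {Ω : Type*} [MeasurableSpace Ω]
    (P : Measure Ω) [IsProbabilityMeasure P] (X : Ω → ℝ) (hX : Integrable X P)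
    (hXm : Measurable X)
    (γ : ℝ) (hγ : γ ∈ Set.Ioo (0 : ℝ) 1)
    (hlevel : (P {ω | VaR P X γ ≤ -X ω}).toReal = 1 - γ) :
    CVaR P X γ = ∫ ω, -X ω ∂(P[|{ω | VaR P X γ ≤ -X ω}]) := by
  set L : Ω → ℝ := fun ω => -X ω with hL
  have hLm : Measurable L := hXm.neg
  set G : ℝ → ENNReal := fun x => P {ω | x < L ω} with hG
  set S : ℝ → Set ℝ := fun β => {x | (G x).toReal ≤ 1 - β} with hS
  have hq : ∀ β, VaR P X β = sInf (S β) := by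
    intro β
    unfold VaR
    congr 1
    ext x
    have : {ω | x + X ω < 0} = {ω | x < L ω} := by
      ext ω; simp only [Set.mem_setOf_eq, hL]; constructor <;> intro h <;> linarith
    simp [hS, hG, this]
  have hGne : ∀ x, G x ≠ ⊤ := fun x => measure_ne_top _ _
  have hGanti : Antitone G := fun x y hxy =>
    measure_mono (fun ω h => lt_of_le_of_lt hxy h)
  have hGtr : ∀ {x y : ℝ}, x ≤ y → (G y).toReal ≤ (G x).toReal :=
    fun {x y} h => ENNReal.toReal_mono (hGne x) (hGanti h)
  have hup : ∀ {β x y : ℝ}, x ∈ S β → x ≤ y → y ∈ S β :=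
    fun {β x y} hx hxy => le_trans (hGtr hxy) hx
  -- nonemptiness
  have hSne : ∀ β : ℝ, β < 1 → (S β).Nonempty := by
    intro β hβ
    have hiInf : ⨅ n : ℕ, G (n : ℝ) = 0 := by
      have hanti : Antitone (fun n : ℕ => {ω | (n : ℝ) < L ω}) := by
        intro n m hnm ω hω
        simp only [Set.mem_setOf_eq] at hω ⊢
        have : (n:ℝ) ≤ (m:ℝ) := by exact_mod_cast hnm
        linarith
      have := hanti.measure_iInter (μ := P)
        (fun n => (measurableSet_lt measurable_const hLm).nullMeasurableSet)
        ⟨0, measure_ne_top _ _⟩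
      have hempty : (⋂ n : ℕ, {ω | (n : ℝ) < L ω}) = (∅ : Set Ω) := by
        ext ω
        simp only [Set.mem_iInter, Set.mem_setOf_eq, Set.mem_empty_iff_false, iff_false, not_forall,
          not_lt]
        obtain ⟨n, hn⟩ := exists_nat_gt (L ω)
        exact ⟨n, hn.le⟩
      rw [hempty, measure_empty] at this
      exact this.symm
    have hlt : ⨅ n : ℕ, G (n : ℝ) < ENNReal.ofReal (1 - β) := by
      rw [hiInf]; exact ENNReal.ofReal_pos.2 (by linarith)
    obtain ⟨n, hn⟩ := iInf_lt_iff.mp hlt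
    exact ⟨(n : ℝ), ENNReal.toReal_le_of_le_ofReal (by linarith) hn.le⟩
  -- bddBelow
  have hSbdd : ∀ β ∈ Set.Ioo (0:ℝ) 1, BddBelow (S β) := by
    intro β hβ
    have hiSup : ⨆ n : ℕ, G (-(n : ℝ)) = 1 := by
      have hmono : Monotone (fun n : ℕ => {ω | (-(n : ℝ)) < L ω}) := by
        intro n m hnm ω hω
        simp only [Set.mem_setOf_eq] at hω ⊢
        have : (n:ℝ) ≤ (m:ℝ) := by exact_mod_cast hnm
        linarith
      have := hmono.measure_iUnion (μ := P)
      have huniv : (⋃ n : ℕ, {ω | (-(n : ℝ)) < L ω}) = (Set.univ : Set Ω) := by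
        ext ω
        simp only [Set.mem_iUnion, Set.mem_setOf_eq, Set.mem_univ, iff_true]
        obtain ⟨n, hn⟩ := exists_nat_gt (-(L ω))
        exact ⟨n, by linarith⟩
      rw [huniv, measure_univ] at this
      exact this.symm
    have hlt : ENNReal.ofReal (1 - β) < ⨆ n : ℕ, G (-(n : ℝ)) := by
      rw [hiSup]; exact ENNReal.ofReal_lt_one.2 (by linarith [hβ.1])
    obtain ⟨n, hn⟩ := lt_iSup_iff.mp hlt
    refine ⟨-(n : ℝ), fun x hx => ?_⟩
    by_contra hcon
    push_neg at hcon
    have h1 : 1 - β < (G (-(n:ℝ))).toReal :=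
      (ENNReal.ofReal_lt_iff_lt_toReal (by linarith [hβ.2]) (hGne _)).1 hn
    have h2 : (G (-(n:ℝ))).toReal ≤ (G x).toReal := hGtr hcon.le
    have : ¬ ((G x).toReal ≤ 1 - β) := by linarith
    exact this hx
  -- membership of the infimum
  have hmem : ∀ β ∈ Set.Ioo (0:ℝ) 1, sInf (S β) ∈ S β := by
    intro β hβ
    set m := sInf (S β) with hm
    have hball : ∀ n : ℕ, m + 1 / ((n : ℝ) + 1) ∈ S β := by
      intro n
      have hpos : (0:ℝ) < 1 / ((n : ℝ) + 1) := by positivity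
      have : sInf (S β) < m + 1 / ((n : ℝ) + 1) := by rw [← hm]; linarith
      obtain ⟨x, hxS, hxlt⟩ := (csInf_lt_iff (hSbdd β hβ) (hSne β hβ.2)).1 this
      exact hup hxS hxlt.le
    have hmono : Monotone (fun n : ℕ => {ω | m + 1 / ((n : ℝ) + 1) < L ω}) := by
      intro n k hnk ω hω
      simp only [Set.mem_setOf_eq] at hω ⊢
      have : (1:ℝ) / ((k : ℝ) + 1) ≤ 1 / ((n : ℝ) + 1) := by
        apply one_div_le_one_div_of_le (by positivity)
        have : (n:ℝ) ≤ (k:ℝ) := by exact_mod_cast hnk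
        linarith
      linarith
    have hunion : (⋃ n : ℕ, {ω | m + 1 / ((n : ℝ) + 1) < L ω}) = {ω | m < L ω} := by
      ext ω
      simp only [Set.mem_iUnion, Set.mem_setOf_eq]
      constructor
      · rintro ⟨n, hn⟩
        have h0 : (0:ℝ) < 1 / ((n : ℝ) + 1) := by positivity
        exact lt_trans (by linarith) hn
      · intro hω
        obtain ⟨n, hn⟩ := exists_nat_one_div_lt (show (0:ℝ) < L ω - m by linarith)
        exact ⟨n, by linarith⟩
    have hGm : G m = ⨆ n : ℕ, G (m + 1 / ((n : ℝ) + 1)) := by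
      have := hmono.measure_iUnion (μ := P)
      rw [hunion] at this
      exact this
    have hle : G m ≤ ENNReal.ofReal (1 - β) := by
      rw [hGm]
      refine iSup_le fun n => ?_
      exact (ENNReal.le_ofReal_iff_toReal_le (hGne _) (by linarith [hβ.2])).2 (hball n)
    exact ENNReal.toReal_le_of_le_ofReal (by linarith [hβ.2]) hle
  -- Galois connection
  have hGalois : ∀ β ∈ Set.Ioo (0:ℝ) 1, ∀ x : ℝ,
      (sInf (S β) ≤ x ↔ (G x).toReal ≤ 1 - β) := by
    intro β hβ x
    constructor
    · intro h; exact hup (hmem β hβ) h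
    · intro h; exact csInf_le (hSbdd β hβ) h
  -- monotonicity
  have hmono : MonotoneOn (fun β => sInf (S β)) (Set.Ioo (0:ℝ) 1) := by
    intro β1 h1 β2 h2 h12
    apply csInf_le_csInf (hSbdd β1 h1) (hSne β2 h2.2)
    intro x hx
    simp only [hS, Set.mem_setOf_eq] at hx ⊢
    linarith
  -- notation
  set c := sInf (S γ) with hc
  set A : Set Ω := {ω | c ≤ L ω} with hA
  have hATheorem : {ω | VaR P X γ ≤ -X ω} = A := by
    ext ω; simp only [hA, Set.mem_setOf_eq, hq γ, hc, hL]
  have hAm : MeasurableSet A := measurableSet_le measurable_const hLm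
  have hlevelA : (P A).toReal = 1 - γ := by rw [← hATheorem]; exact hlevel
  have hcball : (G c).toReal ≤ 1 - γ := hmem γ hγ
  -- pointwise equality of upper-level measures
  have hpt : ∀ t : ℝ, 0 < t →
      (volume.restrict (Set.Ioo γ 1)) {β | t < sInf (S β) - c} =
        (P.restrict A) {ω | t < L ω - c} := by
    intro t ht
    have hGct : (G (c + t)).toReal ≤ 1 - γ := le_trans (hGtr (by linarith)) hcball
    set g := (G (c + t)).toReal with hg
    have hgnn : 0 ≤ g := ENNReal.toReal_nonneg
    have hset1 : {β | t < sInf (S β) - c} ∩ Set.Ioo γ 1 = Set.Ioo (1 - g) 1 := by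
      ext β
      simp only [Set.mem_inter_iff, Set.mem_setOf_eq, Set.mem_Ioo]
      constructor
      · rintro ⟨hβ1, hβ2, hβ3⟩
        have hβIoo : β ∈ Set.Ioo (0:ℝ) 1 := ⟨lt_trans hγ.1 hβ2, hβ3⟩
        have hnle : ¬ (sInf (S β) ≤ c + t) := by linarith
        rw [hGalois β hβIoo] at hnle
        push_neg at hnle
        exact ⟨by rw [hg]; linarith, hβ3⟩
      · rintro ⟨hβ1, hβ2⟩
        have hβγ : γ < β := lt_of_le_of_lt (by linarith) hβ1
        have hβIoo : β ∈ Set.Ioo (0:ℝ) 1 := ⟨lt_trans hγ.1 hβγ, hβ2⟩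
        refine ⟨?_, hβγ, hβ2⟩
        have hnle : ¬ ((G (c + t)).toReal ≤ 1 - β) := by rw [← hg]; linarith
        rw [← hGalois β hβIoo] at hnle
        push_neg at hnle
        linarith
    have hmeas1 : (volume.restrict (Set.Ioo γ 1)) {β | t < sInf (S β) - c}
        = ENNReal.ofReal g := by
      rw [Measure.restrict_apply' measurableSet_Ioo, hset1, Real.volume_Ioo]
      congr 1; ring
    have hset2 : {ω | t < L ω - c} ∩ A = {ω | c + t < L ω} := by
      ext ω
      simp only [Set.mem_inter_iff, Set.mem_setOf_eq, hA]
      constructor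
      · rintro ⟨h1, _⟩; linarith
      · intro h; exact ⟨by linarith, by linarith⟩
    have hmeas2 : (P.restrict A) {ω | t < L ω - c} = G (c + t) := by
      rw [Measure.restrict_apply' hAm, hset2]
    rw [hmeas1, hmeas2, hg, ENNReal.ofReal_toReal (hGne _)]
  -- layer cake on both sides
  have hmonoγ : MonotoneOn (fun β => sInf (S β)) (Set.Ioo γ 1) :=
    hmono.mono (Set.Ioo_subset_Ioo hγ.1.le le_rfl)
  have haem : AEMeasurable (fun β => sInf (S β)) (volume.restrict (Set.Ioo γ 1)) :=
    aemeasurable_restrict_of_monotoneOn measurableSet_Ioo hmonoγ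
  have hnn1 : 0 ≤ᵐ[volume.restrict (Set.Ioo γ 1)] fun β => sInf (S β) - c := by
    refine (ae_restrict_iff' measurableSet_Ioo).2 (ae_of_all _ fun β hβ => ?_)
    have hcs : c ≤ sInf (S β) := hmono hγ ⟨lt_trans hγ.1 hβ.1, hβ.2⟩ hβ.1.le
    simp only [Pi.zero_apply]
    linarith
  have hnn2 : 0 ≤ᵐ[P.restrict A] fun ω => L ω - c := by
    refine (ae_restrict_iff' hAm).2 (ae_of_all _ fun ω hω => ?_)
    have hcs : c ≤ L ω := hω
    simp only [Pi.zero_apply]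
    linarith
  have hlc1 := lintegral_eq_lintegral_meas_lt (volume.restrict (Set.Ioo γ 1)) hnn1
      (haem.sub aemeasurable_const)
  have hlc2 := lintegral_eq_lintegral_meas_lt (P.restrict A) hnn2
      ((hLm.aemeasurable).sub aemeasurable_const)
  have hEq : ∫⁻ β in Set.Ioo γ 1, ENNReal.ofReal (sInf (S β) - c) ∂volume
      = ∫⁻ ω in A, ENNReal.ofReal (L ω - c) ∂P := by
    rw [hlc1, hlc2]
    exact setLIntegral_congr_fun measurableSet_Ioi (fun t ht => hpt t ht)
  have hLint : Integrable (fun ω => L ω - c) (P.restrict A) :=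
    (hX.neg.sub (integrable_const c)).restrict
  have hfin : ∫⁻ ω in A, ENNReal.ofReal (L ω - c) ∂P < ⊤ := hLint.lintegral_lt_top
  have hInt1 : Integrable (fun β => sInf (S β) - c) (volume.restrict (Set.Ioo γ 1)) := by
    refine ⟨(haem.sub aemeasurable_const).aestronglyMeasurable, ?_⟩
    rw [hasFiniteIntegral_iff_ofReal hnn1, hEq]
    exact hfin
  have hreal : ∫ β in Set.Ioo γ 1, (sInf (S β) - c) ∂volume = ∫ ω in A, (L ω - c) ∂P := by
    rw [integral_eq_lintegral_of_nonneg_ae hnn1 (haem.sub aemeasurable_const).aestronglyMeasurable,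
      integral_eq_lintegral_of_nonneg_ae hnn2
        ((hLm.aemeasurable.sub aemeasurable_const).aestronglyMeasurable),
      hEq]
  -- assemble
  have hconst1 : ∫ _ in Set.Ioo γ 1, (c:ℝ) ∂volume = c * (1 - γ) := by
    rw [setIntegral_const, measureReal_def, Real.volume_Ioo, ENNReal.toReal_ofReal (by linarith [hγ.2] : (0:ℝ) ≤ 1 - γ),
      smul_eq_mul]
    ring
  have hLA : Integrable L (P.restrict A) := hX.neg.restrict
  have hsplit2 : ∫ ω in A, (L ω - c) ∂P = (∫ ω in A, L ω ∂P) - c * (1 - γ) := by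
    rw [integral_sub hLA (integrable_const c), setIntegral_const, measureReal_def, hlevelA, smul_eq_mul]
    ring
  have hIoo_int : ∫ β in Set.Ioo γ 1, sInf (S β) ∂volume = ∫ ω in A, L ω ∂P := by
    have hsplit1 : ∫ β in Set.Ioo γ 1, sInf (S β) ∂volume
        = (∫ β in Set.Ioo γ 1, (sInf (S β) - c) ∂volume) + c * (1 - γ) := by
      rw [← hconst1, ← integral_add hInt1 (integrable_const c)]
      congr 1
      funext β
      ring
    rw [hsplit1, hreal, hsplit2]
    ring
  have hinterval : ∫ β in γ..1, VaR P X β = ∫ ω in A, L ω ∂P := by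
    rw [intervalIntegral.integral_of_le hγ.2.le]
    simp only [hq]
    rw [integral_Ioc_eq_integral_Ioo]
    exact hIoo_int
  have hcondint : ∫ ω, -X ω ∂(P[|A]) = (1 - γ)⁻¹ * ∫ ω in A, L ω ∂P := by
    rw [ProbabilityTheory.cond, integral_smul_measure, ENNReal.toReal_inv, hlevelA, smul_eq_mul]
  rw [hATheorem, CVaR, hinterval, hcondint, one_div]

open ProbabilityTheory in
/-- Conditional-expectation representation of CVaR: if `ℙ(-X ≥ VaR_γ(X)) = 1 - γ`, then
`CVaR_γ(X) = E[-X | -X ≥ VaR_γ(X)]`, the conditional expectation of the loss given that the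
loss is at least the value-at-risk threshold. -/
theorem CVaR_eq_condExp_loss {Ω : Type*} [MeasurableSpace Ω]
    (P : Measure Ω) [IsProbabilityMeasure P] (X : Ω → ℝ) (hX : Integrable X P)
    (γ : ℝ) (hγ : γ ∈ Set.Ioo (0 : ℝ) 1)
    (hlevel : (P {ω | VaR P X γ ≤ -X ω}).toReal = 1 - γ) :
    CVaR P X γ = ∫ ω, -X ω ∂(P[|{ω | VaR P X γ ≤ -X ω}]) := by
  have hsm := hX.1
  set Y := hsm.mk X with hY
  have hYm : Measurable Y := hsm.measurable_mk
  have hXY : X =ᵐ[P] Y := hsm.ae_eq_mk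
  have hYint : Integrable Y P := hX.congr hXY
  have hsets : ∀ x : ℝ, {ω | x + X ω < 0} =ᵐ[P] {ω | x + Y ω < 0} := by
    intro x
    filter_upwards [hXY] with ω h
    show (x + X ω < 0) = (x + Y ω < 0)
    rw [h]
  have hVaR : VaR P X = VaR P Y := by
    funext β
    unfold VaR
    congr 1
    ext x
    rw [Set.mem_setOf_eq, Set.mem_setOf_eq, measure_congr (hsets x)]
  have hAe : {ω | VaR P X γ ≤ -X ω} =ᵐ[P] {ω | VaR P Y γ ≤ -Y ω} := by
    filter_upwards [hXY] with ω h
    show (VaR P X γ ≤ -X ω) = (VaR P Y γ ≤ -Y ω)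
    rw [h, hVaR]
  have hPA : P {ω | VaR P X γ ≤ -X ω} = P {ω | VaR P Y γ ≤ -Y ω} := measure_congr hAe
  have hlevelY : (P {ω | VaR P Y γ ≤ -Y ω}).toReal = 1 - γ := by rw [← hPA]; exact hlevel
  have hcond : P[|{ω | VaR P X γ ≤ -X ω}] = P[|{ω | VaR P Y γ ≤ -Y ω}] := by
    rw [ProbabilityTheory.cond, ProbabilityTheory.cond, hPA, Measure.restrict_congr_set hAe]
  have habs : P[|{ω | VaR P Y γ ≤ -Y ω}] ≪ P := by
    refine Measure.AbsolutelyContinuous.mk fun s hs h0 => ?_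
    rw [ProbabilityTheory.cond, Measure.smul_apply, Measure.restrict_apply hs,
      measure_mono_null Set.inter_subset_left h0]
    simp
  have hintY := CVaR_aux P Y hYint hYm γ hγ hlevelY
  have hCVaR : CVaR P X γ = CVaR P Y γ := by rw [CVaR, CVaR, hVaR]
  rw [hCVaR, hcond, hintY]
  exact integral_congr_ae (by filter_upwards [habs.ae_le hXY] with ω h; simp [h])
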